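/- Let τ be an involutive antiautomorphism of Mat(d,k) with dual τ*, and let P₁₂, P₂₃ be the operators on Mat*(d,k)⊗³ acting as P (defined by P(E*_{ij}⊗E*_{kl}) = E*_{kj}⊗E*_{il}) on the indicated pairs of factors. Then (12)∘(τ*)⊗³∘P₁₂∘P₂₃ = P₁₂∘P₂₃∘(23)∘(τ*)⊗³ as endomorphisms of Mat*(d,k)⊗³, where (12) and (23) are the indicated transpositions of tensor factors. -/

import Mathlib

open TensorProduct

noncomputable section

/-- The dual basis element `E*_{ij}` of the dual of the matrix algebra. -/
def estar (k : Type*) [Field k] {d : ℕ} (i j : Fin d) :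
    Module.Dual k (Matrix (Fin d) (Fin d) k) where
  toFun M := M i j
  map_add' _ _ := rfl
  map_smul' _ _ := rfl

section
open Matrix
theorem exists_conj_pair (k : Type*) [Field k] (d : ℕ)
    (τ : Matrix (Fin d) (Fin d) k →ₗ[k] Matrix (Fin d) (Fin d) k)
    (hanti : ∀ M N : Matrix (Fin d) (Fin d) k, τ (M * N) = τ N * τ M)
    (hinv : ∀ M : Matrix (Fin d) (Fin d) k, τ (τ M) = M) :
    ∃ A B : Matrix (Fin d) (Fin d) k, A * B = 1 ∧
      ∀ p q i j : Fin d, τ (Matrix.single p q 1) i j = A j p * B q i := by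
  rcases Nat.eq_zero_or_pos d with hd | hd
  · exact ⟨1, 1, by simp, by subst hd; exact fun p => p.elim0⟩
  set σ : Matrix (Fin d) (Fin d) k → Matrix (Fin d) (Fin d) k := fun M => (τ M)ᵀ with hσ
  have hσmul : ∀ M N, σ (M * N) = σ M * σ N := by
    intro M N; simp [hσ, hanti, transpose_mul]
  have hσinj : Function.Injective σ := by
    intro M N h
    have : τ M = τ N := transpose_injective h
    simpa [hinv] using congrArg τ this
  set z : Fin d := ⟨0, hd⟩
  have hEzz : σ (Matrix.single z z (1:k)) ≠ 0 := by
    intro h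
    have h0 : σ (0 : Matrix (Fin d) (Fin d) k) = 0 := by simp [hσ]
    have := hσinj (h.trans h0.symm)
    have := congrFun (congrFun this z) z
    simp [Matrix.single] at this
  obtain ⟨i0, j0, hij⟩ : ∃ i0 j0, σ (Matrix.single z z (1:k)) i0 j0 ≠ 0 := by
    by_contra h; push_neg at h
    exact hEzz (by ext i j; simpa using h i j)
  set v : Fin d → k := Pi.single j0 1 with hv
  have hw : σ (Matrix.single z z (1:k)) *ᵥ v ≠ 0 := by
    intro h
    have := congrFun h i0
    simp [hv, mulVec_single] at this
    exact hij this
  set A : Matrix (Fin d) (Fin d) k :=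
    Matrix.of (fun i q => (σ (Matrix.single q z (1:k)) *ᵥ v) i) with hA
  have key : ∀ p q : Fin d, σ (Matrix.single p q (1:k)) * A = A * Matrix.single p q (1:k) := by
    intro p q
    ext i l
    have h1 : (σ (Matrix.single p q (1:k)) * A) i l
        = ((σ (Matrix.single p q (1:k)) * σ (Matrix.single l z (1:k))) *ᵥ v) i := by
      simp only [hA, Matrix.mul_apply, mulVec, dotProduct, of_apply, Finset.sum_mul,
        Finset.mul_sum, mul_assoc]
      rw [Finset.sum_comm]
    rw [h1, ← hσmul]
    rcases eq_or_ne q l with rfl | hql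
    · rw [Matrix.single_mul_single_same, one_mul]
      simp [hA]
    · rw [show Matrix.single p q (1:k) * Matrix.single l z 1 = 0 from
          Matrix.single_mul_single_of_ne _ _ _ _ hql _]
      simp [Ne.symm hql, hσ]
  have hAinj : Function.Injective (A.mulVec) := by
    intro x y hxy
    have h0 : ∀ w, A *ᵥ w = 0 → w = 0 := by
      intro w hw0
      funext l
      have h2 : σ (Matrix.single z l (1:k)) *ᵥ (A *ᵥ w) = 0 := by rw [hw0, mulVec_zero]
      rw [mulVec_mulVec, key z l, ← mulVec_mulVec] at h2
      have h3 : Matrix.single z l (1:k) *ᵥ w = w l • (Pi.single z 1 : Fin d → k) := by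
        funext i
        simp only [mulVec, dotProduct, Matrix.single, of_apply, ite_mul, one_mul, zero_mul,
          Pi.smul_apply, Pi.single_apply, smul_eq_mul]
        by_cases hi : z = i
        · subst hi; simp [Finset.sum_ite_eq, mul_comm]
        · rw [Finset.sum_eq_zero (fun m _ => by simp [hi]), if_neg (fun h => hi h.symm)]
          simp
      rw [h3, mulVec_smul] at h2
      have h4 : A *ᵥ Pi.single z 1 = σ (Matrix.single z z (1:k)) *ᵥ v := by
        funext i; simp [hA, mulVec_single]
      rw [h4] at h2
      rcases smul_eq_zero.mp h2 with h | h
      · exact h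
      · exact absurd h hw
    have := h0 (x - y) (by rw [mulVec_sub, hxy, sub_self])
    exact sub_eq_zero.mp this
  have hU : IsUnit A := mulVec_injective_iff_isUnit.mp hAinj
  have hdet : IsUnit A.det := (isUnit_iff_isUnit_det A).mp hU
  refine ⟨A, A⁻¹, mul_nonsing_inv A hdet, ?_⟩
  intro p q i j
  have hσE : σ (Matrix.single p q (1:k)) = A * Matrix.single p q 1 * A⁻¹ := by
    rw [← key, Matrix.mul_assoc, mul_nonsing_inv A hdet, Matrix.mul_one]
  have : τ (Matrix.single p q (1:k)) i j = σ (Matrix.single p q (1:k)) j i := rfl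
  rw [this, hσE, Matrix.mul_apply, Finset.sum_eq_single q]
  · rw [Matrix.mul_single_apply_same]; ring
  · intro m _ hm
    simp [hm]
  · intro h; exact absurd (Finset.mem_univ q) h
open TensorProduct Matrix

@[simp] lemma estar_apply (k : Type*) [Field k] {d : ℕ} (i j : Fin d)
    (M : Matrix (Fin d) (Fin d) k) : estar k i j M = M i j := rfl

lemma dualBasis_eq_estar (k : Type*) [Field k] {d : ℕ} (p : Fin d × Fin d) :
    (Matrix.stdBasis k (Fin d) (Fin d)).dualBasis p = estar k p.1 p.2 := by
  apply (Matrix.stdBasis k (Fin d) (Fin d)).ext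
  intro q
  rw [Module.Basis.dualBasis_apply_self]
  rw [Matrix.stdBasis_eq_single]
  rcases p with ⟨i,j⟩; rcases q with ⟨a,b⟩
  simp [Matrix.single, Prod.ext_iff, eq_comm, and_comm]

lemma dualMap_estar (k : Type*) [Field k] {d : ℕ}
    (τ : Matrix (Fin d) (Fin d) k →ₗ[k] Matrix (Fin d) (Fin d) k)
    (A B : Matrix (Fin d) (Fin d) k)
    (hT : ∀ p q i j : Fin d, τ (Matrix.single p q 1) i j = A j p * B q i)
    (i j : Fin d) :
    τ.dualMap (estar k i j) = ∑ p, ∑ q, (A j p * B q i) • estar k p q := by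
  apply (Matrix.stdBasis k (Fin d) (Fin d)).ext
  rintro ⟨a,b⟩
  rw [Matrix.stdBasis_eq_single]
  simp only [LinearMap.dualMap_apply, estar_apply, LinearMap.sum_apply,
    LinearMap.smul_apply, smul_eq_mul]
  rw [hT]
  simp only [Matrix.single, of_apply, mul_ite, mul_one, mul_zero, ← ite_and]
  rw [Finset.sum_eq_single a, Finset.sum_eq_single b] <;> simp +contextual [eq_comm]
end

/-- An operator on `V ⊗ V` acting on the first two factors of `V ⊗ V ⊗ V`. -/
def onFirstTwo (k V : Type*) [CommRing k] [AddCommGroup V] [Module k V]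
    (P : V ⊗[k] V →ₗ[k] V ⊗[k] V) : V ⊗[k] (V ⊗[k] V) →ₗ[k] V ⊗[k] (V ⊗[k] V) :=
  (TensorProduct.assoc k V V V).toLinearMap ∘ₗ LinearMap.rTensor V P ∘ₗ
    (TensorProduct.assoc k V V V).symm.toLinearMap

/-- The transposition `(12)` of the first two factors of `V ⊗ V ⊗ V`. -/
def swap12 (k V : Type*) [CommRing k] [AddCommGroup V] [Module k V] :
    V ⊗[k] (V ⊗[k] V) →ₗ[k] V ⊗[k] (V ⊗[k] V) :=
  onFirstTwo k V (TensorProduct.comm k V V).toLinearMap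

/-- The transposition `(23)` of the last two factors of `V ⊗ V ⊗ V`. -/
def swap23 (k V : Type*) [CommRing k] [AddCommGroup V] [Module k V] :
    V ⊗[k] (V ⊗[k] V) →ₗ[k] V ⊗[k] (V ⊗[k] V) :=
  LinearMap.lTensor V (TensorProduct.comm k V V).toLinearMap

section
open Matrix
lemma onFirstTwo_tmul (k V : Type*) [CommRing k] [AddCommGroup V] [Module k V]
    (P : V ⊗[k] V →ₗ[k] V ⊗[k] V) (x y z : V) :
    onFirstTwo k V P (x ⊗ₜ (y ⊗ₜ z)) =
      TensorProduct.assoc k V V V (LinearMap.rTensor V P ((x ⊗ₜ y) ⊗ₜ z)) := by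
  simp [onFirstTwo, TensorProduct.assoc_symm_tmul]

lemma flat6 {M : Type*} [AddCommMonoid M] {n : ℕ}
    (F : Fin n → Fin n → Fin n → Fin n → Fin n → Fin n → M) :
    (∑ x : Fin n × Fin n × Fin n × Fin n × Fin n × Fin n,
        F x.1 x.2.1 x.2.2.1 x.2.2.2.1 x.2.2.2.2.1 x.2.2.2.2.2)
      = ∑ x0, ∑ x1, ∑ x2, ∑ x3, ∑ x4, ∑ x5, F x0 x1 x2 x3 x4 x5 := by
  simp only [Fintype.sum_prod_type]

lemma sum6 {M : Type*} [AddCommMonoid M] {n : ℕ}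
    (f g : Fin n → Fin n → Fin n → Fin n → Fin n → Fin n → M)
    (h : ∀ x0 x1 x2 x3 x4 x5, g x0 x1 x2 x3 x4 x5 = f x0 x3 x2 x5 x4 x1) :
    (∑ x0, ∑ x1, ∑ x2, ∑ x3, ∑ x4, ∑ x5, f x0 x1 x2 x3 x4 x5)
      = ∑ x0, ∑ x1, ∑ x2, ∑ x3, ∑ x4, ∑ x5, g x0 x1 x2 x3 x4 x5 := by
  rw [← flat6 f, ← flat6 g]
  exact (Fintype.sum_equiv
    ⟨fun x => (x.1, x.2.2.2.1, x.2.2.1, x.2.2.2.2.2, x.2.2.2.2.1, x.2.1),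
     fun y => (y.1, y.2.2.2.2.2, y.2.2.1, y.2.1, y.2.2.2.2.1, y.2.2.2.1),
     fun ⟨a,b,c,d,e,f⟩ => rfl, fun ⟨a,b,c,d,e,f⟩ => rfl⟩ _ _
    (fun ⟨x0,x1,x2,x3,x4,x5⟩ => h x0 x1 x2 x3 x4 x5)).symm
end

set_option maxHeartbeats 4000000 in
/-- `(12) ∘ (τ*)⊗³ ∘ P₁₂ ∘ P₂₃ = P₁₂ ∘ P₂₃ ∘ (23) ∘ (τ*)⊗³` on `Mat*(d,k)⊗³`. -/
theorem swap_tau_star_P12_P23 (k : Type*) [Field k] [CharZero k] [IsAlgClosed k] (d : ℕ)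
    (P : Module.Dual k (Matrix (Fin d) (Fin d) k) ⊗[k] Module.Dual k (Matrix (Fin d) (Fin d) k)
      →ₗ[k] Module.Dual k (Matrix (Fin d) (Fin d) k) ⊗[k] Module.Dual k (Matrix (Fin d) (Fin d) k))
    (hP : ∀ i j a b : Fin d,
      P (estar k i j ⊗ₜ[k] estar k a b) = estar k a j ⊗ₜ[k] estar k i b)
    (τ : Matrix (Fin d) (Fin d) k →ₗ[k] Matrix (Fin d) (Fin d) k)
    (hanti : ∀ M N : Matrix (Fin d) (Fin d) k, τ (M * N) = τ N * τ M)
    (hinv : ∀ M : Matrix (Fin d) (Fin d) k, τ (τ M) = M) :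
    swap12 k _ ∘ₗ
        TensorProduct.map τ.dualMap (TensorProduct.map τ.dualMap τ.dualMap) ∘ₗ
        onFirstTwo k _ P ∘ₗ LinearMap.lTensor (Module.Dual k (Matrix (Fin d) (Fin d) k)) P
      = onFirstTwo k _ P ∘ₗ LinearMap.lTensor (Module.Dual k (Matrix (Fin d) (Fin d) k)) P ∘ₗ
          swap23 k _ ∘ₗ
          TensorProduct.map τ.dualMap (TensorProduct.map τ.dualMap τ.dualMap) := by
  obtain ⟨A, B, hAB, hT⟩ := exists_conj_pair k d τ hanti hinv
  apply (((Matrix.stdBasis k (Fin d) (Fin d)).dualBasis).tensorProduct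
    (((Matrix.stdBasis k (Fin d) (Fin d)).dualBasis).tensorProduct
      ((Matrix.stdBasis k (Fin d) (Fin d)).dualBasis))).ext
  rintro ⟨⟨i,j⟩, ⟨a,b⟩, ⟨c,e⟩⟩
  simp only [Module.Basis.tensorProduct_apply, Module.Basis.tensorProduct_apply', dualBasis_eq_estar]
  simp only [LinearMap.comp_apply, swap23, swap12, LinearMap.lTensor_tmul,
    TensorProduct.comm_tmul, hP, onFirstTwo_tmul, LinearMap.rTensor_tmul,
    TensorProduct.assoc_tmul, TensorProduct.map_tmul,
    dualMap_estar k τ A B hT,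
    TensorProduct.tmul_sum, TensorProduct.sum_tmul, Finset.smul_sum,
    ← TensorProduct.smul_tmul', TensorProduct.tmul_smul, map_sum, _root_.map_smul, smul_smul]
  simp only [LinearEquiv.coe_coe, TensorProduct.comm_tmul, hP, onFirstTwo_tmul,
    LinearMap.rTensor_tmul, TensorProduct.assoc_tmul]
  exact sum6 _ _ (fun x0 x1 x2 x3 x4 x5 => by congr 1; ring)

end
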